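/- (Lemma) Let L be a left Leibniz algebra over a field k of characteristic 0 and let I be a left ideal of L. Then the right normalizer N^r_L(I) = {a ∈ L : [I,a] ⊆ I} is a subalgebra of L. -/
import Mathlib

section LeibnizDefs

variable {k : Type*} [Field k] {M : Type*} [AddCommGroup M] [Module k M]

/-- `[A, B]`: the linear span of brackets of elements of two subspaces. -/
def bracketSpan (β : M →ₗ[k] M →ₗ[k] M) (A B : Submodule k M) : Submodule k M :=
  Submodule.span k {z : M | ∃ a ∈ A, ∃ b ∈ B, z = β a b}

/-- Derived series of a subspace `I`: `D^0 = I`, `D^{n+1} = [D^n, D^n]`. -/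
def derivedSeriesOf (β : M →ₗ[k] M →ₗ[k] M) (I : Submodule k M) : ℕ → Submodule k M
  | 0 => I
  | n + 1 => bracketSpan β (derivedSeriesOf β I n) (derivedSeriesOf β I n)

/-- Lower central series of a subspace `I`: `C^0 = I`, `C^{n+1} = [I, C^n]`. -/
def lowerCentralSeriesOf (β : M →ₗ[k] M →ₗ[k] M) (I : Submodule k M) : ℕ → Submodule k M
  | 0 => I
  | n + 1 => bracketSpan β I (lowerCentralSeriesOf β I n)

/-- A two-sided ideal. -/
def LeibnizIdeal (β : M →ₗ[k] M →ₗ[k] M) (I : Submodule k M) : Prop :=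
  (∀ x : M, ∀ u ∈ I, β x u ∈ I) ∧ (∀ u ∈ I, ∀ x : M, β u x ∈ I)

/-- A subspace is solvable if its derived series reaches `0`. -/
def LeibnizSolvable (β : M →ₗ[k] M →ₗ[k] M) (I : Submodule k M) : Prop :=
  ∃ n, derivedSeriesOf β I n = ⊥

/-- A subspace is nilpotent if its lower central series reaches `0`. -/
def LeibnizNilpotent (β : M →ₗ[k] M →ₗ[k] M) (I : Submodule k M) : Prop :=
  ∃ n, lowerCentralSeriesOf β I n = ⊥

/-- A subalgebra: a subspace closed under the bracket. -/
def LeibnizSubalgebra (β : M →ₗ[k] M →ₗ[k] M) (S : Submodule k M) : Prop :=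
  ∀ u ∈ S, ∀ v ∈ S, β u v ∈ S

end LeibnizDefs

/-- The right normalizer of a left ideal is a subalgebra. -/
theorem stmt_7 {k : Type*} [Field k] [CharZero k] {L : Type*} [AddCommGroup L] [Module k L]
    (β : L →ₗ[k] L →ₗ[k] L)
    (leib : ∀ x y z : L, β x (β y z) = β (β x y) z + β y (β x z))
    (I : Submodule k L) (hI : ∀ x : L, ∀ u ∈ I, β x u ∈ I) :
    ∃ N : Submodule k L, (N : Set L) = {a : L | ∀ u ∈ I, β u a ∈ I} ∧
      LeibnizSubalgebra β N := by
  refine ⟨{ carrier := {a : L | ∀ u ∈ I, β u a ∈ I}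
            zero_mem' := fun u hu => by simp
            add_mem' := fun ha hb u hu => by
              rw [map_add]; exact I.add_mem (ha u hu) (hb u hu)
            smul_mem' := fun c a ha u hu => by
              rw [map_smul]; exact I.smul_mem c (ha u hu) }, rfl, ?_⟩
  intro a ha b hb u hu
  have h := leib u a b
  rw [h]
  exact I.add_mem (hb _ (ha u hu)) (hI a _ (hb u hu))
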